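/- Let k be a field of characteristic zero and f ∈ k[x,y,z] with finite Milnor number. Every quasiclassical datum (p, S), consisting of p ∈ k[x,y,z] and a bivector field S with [f, S] = 0, automatically satisfies [S, S] = 0 and [f, [p, S]] ∈ Im(ad_f on bivectors); i.e., every first-order noncommutative unfolding of f given by (p,S) with [f,S]=0 extends to second order. -/

import Mathlib

open MvPolynomial

/- Polyvector fields on affine `n`-space in coordinates.  Since `T_A = Der_k(A)` is free on
`∂₁, …, ∂ₙ`, a `p`-vector field is given by its alternating array of coefficients.  The
Schouten–Nijenhuis bracket is given by the classical coordinate formulas below. -/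

variable {k : Type*} [CommRing k] {n : ℕ}

/-- The coefficients of the Schouten bracket `[g, S]` (contraction of the bivector `S` with
`dg`): `[g,S]_j = ∑ᵢ S i j ∂ᵢ g`.  It is a vector field. -/
noncomputable def schFnBiv (g : MvPolynomial (Fin n) k)
    (S : Fin n → Fin n → MvPolynomial (Fin n) k) : Fin n → MvPolynomial (Fin n) k :=
  fun j => ∑ i, S i j * pderiv i g

/-- The coefficients of the Schouten bracket `[g, T]` of a function with a trivector `T`
(contraction with `dg`): it is a bivector, `[g,T]_{jk} = ∑ᵢ T i j k ∂ᵢ g`. -/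
noncomputable def schFnTriv (g : MvPolynomial (Fin n) k)
    (T : Fin n → Fin n → Fin n → MvPolynomial (Fin n) k) :
    Fin n → Fin n → MvPolynomial (Fin n) k :=
  fun j l => ∑ i, T i j l * pderiv i g

/-- The coefficients of the Schouten bracket `[S, S]` of a bivector with itself; it is a
trivector with components `[S,S]^{ijk} = 2 ∑ₗ (S l i ∂ₗ S j k + S l j ∂ₗ S k i + S l k ∂ₗ S i j)`
(we drop the overall factor 2, harmless in characteristic zero). -/
noncomputable def schBivBiv (S : Fin n → Fin n → MvPolynomial (Fin n) k) :
    Fin n → Fin n → Fin n → MvPolynomial (Fin n) k :=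
  fun i j l => ∑ m, (S m i * pderiv m (S j l) + S m j * pderiv m (S l i) +
    S m l * pderiv m (S i j))

/-- A trivector array is alternating. -/
def IsAltTriv (T : Fin n → Fin n → Fin n → MvPolynomial (Fin n) k) : Prop :=
  ∀ i j l, T i j l = - T j i l ∧ T i j l = - T i l j

/-- A bivector array is antisymmetric. -/
def IsAltBiv (S : Fin n → Fin n → MvPolynomial (Fin n) k) : Prop :=
  ∀ i j, S i j = - S j i

section Auxiliary

/-- Second partial derivatives of multivariate polynomials commute. -/
lemma pderiv_comm' {σ R : Type*} [CommSemiring R] (i j : σ) (f : MvPolynomial σ R) :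
    pderiv i (pderiv j f) = pderiv j (pderiv i f) := by
  classical
  induction f using MvPolynomial.induction_on with
  | C a => simp
  | add p q hp hq => simp [hp, hq]
  | mul_X q s h =>
    by_cases hsj : s = j <;> by_cases hsi : s = i <;>
      subst_vars <;>
      simp [pderiv_mul, pderiv_X_self, pderiv_X_of_ne, h, *] <;> ring

/-- In a UFD, a vector `(u,v,w)` proportional to `(a,b,c)` (cross product zero) with
`(a,b,c)` having no common factor and `a ≠ 0` is a multiple of `(a,b,c)`. -/
lemma key_prop {A : Type*} [CommRing A] [IsDomain A] [UniqueFactorizationMonoid A]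
    {a b c u v w : A}
    (hcop : ∀ q : A, q ∣ a → q ∣ b → q ∣ c → IsUnit q) (ha : a ≠ 0)
    (h1 : u * b = v * a) (h2 : u * c = w * a) :
    ∃ g : A, u = g * a ∧ v = g * b ∧ w = g * c := by
  have hdvd1 : a ∣ u * b := ⟨v, by linear_combination h1⟩
  obtain ⟨a₁, a₂, ha₁u, ha₂b, rfl⟩ := DecompositionMonoid.primal a hdvd1
  obtain ⟨u', rfl⟩ := ha₁u
  have ha₁ : a₁ ≠ 0 := left_ne_zero_of_mul ha
  have h2' : u' * c = w * a₂ := by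
    apply mul_left_cancel₀ ha₁; linear_combination h2
  have hrel : IsRelPrime a₂ c := fun q hq hqc =>
    hcop q (hq.mul_left a₁) (hq.trans ha₂b) hqc
  have hdvd2 : a₂ ∣ u' * c := ⟨w, by linear_combination h2'⟩
  have hdvd3 : a₂ ∣ u' := hrel.dvd_of_dvd_mul_right hdvd2
  obtain ⟨g, rfl⟩ := hdvd3
  refine ⟨g, by ring, ?_, ?_⟩
  · apply mul_right_cancel₀ ha; linear_combination -h1
  · apply mul_right_cancel₀ ha; linear_combination -h2

lemma aux_deg {K : Type*} [Field K] (P : Polynomial K) (i j : Fin 3) (hij : j ≠ i) :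
    degreeOf j (Polynomial.aeval (X i : MvPolynomial (Fin 3) K) P) = 0 := by
  induction P using Polynomial.induction_on' with
  | add p q hp hq =>
    rw [map_add]
    exact Nat.eq_zero_of_le_zero ((degreeOf_add_le _ _ _).trans (by simp [hp, hq]))
  | monomial n a =>
    rw [Polynomial.aeval_monomial]
    refine Nat.eq_zero_of_le_zero ((degreeOf_mul_le _ _ _).trans ?_)
    have h2 : degreeOf j ((X i : MvPolynomial (Fin 3) K) ^ n) ≤ n * degreeOf j (X i) :=
      degreeOf_pow_le _ _ _
    rw [degreeOf_X, if_neg hij] at h2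
    have h1 : degreeOf j (algebraMap K (MvPolynomial (Fin 3) K) a) = 0 := degreeOf_C _ _
    omega

/-- If the Milnor algebra is finite dimensional, the partial derivatives of `f` have no
common (non-unit) factor. -/
lemma coprime_of_fd {K : Type*} [Field K] (f : MvPolynomial (Fin 3) K)
    (hmu : FiniteDimensional K
      (MvPolynomial (Fin 3) K ⧸
        Ideal.span (Set.range fun i : Fin 3 => pderiv i f)))
    (q : MvPolynomial (Fin 3) K) (hq : ∀ i : Fin 3, q ∣ pderiv i f) : IsUnit q := by
  have hIJ : Ideal.span (Set.range fun i : Fin 3 => pderiv i f)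
      ≤ Ideal.span {q} := Ideal.span_le.2 (by
    rintro _ ⟨i, rfl⟩
    show pderiv i f ∈ Ideal.span {q}
    exact Ideal.mem_span_singleton.2 (hq i))
  let φ : (MvPolynomial (Fin 3) K ⧸ Ideal.span (Set.range fun i : Fin 3 => pderiv i f))
      →ₐ[K] MvPolynomial (Fin 3) K ⧸ Ideal.span {q} :=
    Ideal.Quotient.liftₐ _ (Ideal.Quotient.mkₐ K _)
      (fun a haI => by
        rw [Ideal.Quotient.mkₐ_eq_mk, Ideal.Quotient.eq_zero_iff_mem]
        exact hIJ haI)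
  have hφ : Function.Surjective φ := by
    intro x
    obtain ⟨y, rfl⟩ := Ideal.Quotient.mkₐ_surjective K (Ideal.span {q}) x
    exact ⟨Ideal.Quotient.mk _ y, by simp [φ]; rfl⟩
  haveI : Module.Finite K (MvPolynomial (Fin 3) K ⧸ Ideal.span {q}) :=
    Module.Finite.of_surjective φ.toLinearMap hφ
  haveI : Algebra.IsIntegral K (MvPolynomial (Fin 3) K ⧸ Ideal.span {q}) :=
    Algebra.IsIntegral.of_finite K _
  have hQ : ∀ i : Fin 3, ∃ Q : MvPolynomial (Fin 3) K,
      Q ≠ 0 ∧ q ∣ Q ∧ ∀ j, j ≠ i → degreeOf j Q = 0 := by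
    intro i
    obtain ⟨P, hPmonic, hPeval⟩ :=
      Algebra.IsIntegral.isIntegral (R := K)
        (Ideal.Quotient.mkₐ K (Ideal.span {q}) (X i))
    refine ⟨Polynomial.aeval (X i) P, ?_, ?_, fun j hj => aux_deg P i j hj⟩
    · intro h0
      have h1 := congrArg
        (MvPolynomial.aeval (fun _ : Fin 3 => (Polynomial.X : Polynomial K))) h0
      rw [← Polynomial.aeval_algHom_apply, map_zero] at h1
      simp only [aeval_X] at h1
      rw [Polynomial.aeval_X_left_apply] at h1
      exact hPmonic.ne_zero h1
    · rw [← Ideal.mem_span_singleton, ← Ideal.Quotient.eq_zero_iff_mem]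
      have h2 := Polynomial.aeval_algHom_apply
        (Ideal.Quotient.mkₐ K (Ideal.span {q})) (X i) P
      rw [Polynomial.aeval_def] at h2
      rw [show (Ideal.Quotient.mk (Ideal.span {q})) (Polynomial.aeval (X i) P)
            = Ideal.Quotient.mkₐ K (Ideal.span {q}) (Polynomial.aeval (X i) P) from rfl,
        ← h2, hPeval]
  have hdeg : ∀ j : Fin 3, degreeOf j q = 0 := by
    intro j
    obtain ⟨i, hij⟩ : ∃ i : Fin 3, i ≠ j := by
      fin_cases j
      · exact ⟨1, by decide⟩
      · exact ⟨0, by decide⟩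
      · exact ⟨0, by decide⟩
    obtain ⟨Q, hQne, hqQ, hdQ⟩ := hQ i
    set e : Fin 3 ≃ Fin 3 := Equiv.swap 0 j with he
    have key : ∀ r : MvPolynomial (Fin 3) K,
        degreeOf j r = (finSuccEquiv K 2 (rename e r)).natDegree := by
      intro r
      rw [natDegree_finSuccEquiv]
      have h5 := degreeOf_rename_of_injective (p := r) e.injective j
      rw [show e j = 0 from Equiv.swap_apply_right 0 j] at h5
      exact h5.symm
    have hEQ : (finSuccEquiv K 2 (rename e Q)) ≠ 0 := by
      intro h
      apply hQne
      have h6 : rename (⇑e) Q = 0 := (finSuccEquiv K 2).injective (by simpa using h)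
      have h7 := congrArg (rename e.symm) h6
      rw [map_zero, rename_rename] at h7
      simpa using h7
    have hdvd : (finSuccEquiv K 2 (rename e q)) ∣ (finSuccEquiv K 2 (rename e Q)) :=
      map_dvd ((renameEquiv K e).trans (finSuccEquiv K 2)).toAlgHom hqQ
    have hle := Polynomial.natDegree_le_of_dvd hdvd hEQ
    have h3 := hdQ j hij.symm
    rw [key Q] at h3
    rw [key q]
    omega
  have hsupp : ∀ m ∈ q.support, m = 0 := fun m hm =>
    Finsupp.ext fun x => Nat.eq_zero_of_le_zero
      ((monomial_le_degreeOf x hm).trans (le_of_eq (hdeg x)))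
  have hq0 : q ≠ 0 := by
    obtain ⟨Q, hQne, hqQ, -⟩ := hQ 0
    exact fun h => hQne (zero_dvd_iff.1 (h ▸ hqQ))
  have hqC : q = C (coeff 0 q) := by
    ext m
    rw [coeff_C]
    split_ifs with h
    · rw [← h]
    · by_contra hne
      exact h ((hsupp m (mem_support_iff.2 hne)).symm ▸ rfl)
  rw [hqC]
  exact (isUnit_iff_ne_zero.2 (fun h => hq0 (by rw [hqC, h, map_zero]))).map C

private lemma fin3cases : ∀ i : Fin 3, i = 0 ∨ i = 1 ∨ i = 2 := by decide

lemma part1 {K : Type*} [Field K] (f g : MvPolynomial (Fin 3) K)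
    (c10 : pderiv 1 (pderiv 0 f) = pderiv 0 (pderiv 1 f))
    (c20 : pderiv 2 (pderiv 0 f) = pderiv 0 (pderiv 2 f))
    (c21 : pderiv 2 (pderiv 1 f) = pderiv 1 (pderiv 2 f)) :
    ∀ i j l, schBivBiv (![![0, g * pderiv 2 f, -(g * pderiv 1 f)],
                      ![-(g * pderiv 2 f), 0, g * pderiv 0 f],
                      ![g * pderiv 1 f, -(g * pderiv 0 f), 0]]) i j l = 0 := by
  intro i j l
  rcases fin3cases i with rfl|rfl|rfl <;> rcases fin3cases j with rfl|rfl|rfl <;>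
    rcases fin3cases l with rfl|rfl|rfl <;>
    · simp only [schBivBiv, Fin.sum_univ_three, Matrix.cons_val_zero, Matrix.cons_val_one,
        Matrix.head_cons, Matrix.cons_val_two, Matrix.tail_cons]
      simp only [pderiv_mul, map_neg, map_zero, c10, c20, c21]
      ring

lemma part2 {K : Type*} [Field K] (f g p : MvPolynomial (Fin 3) K) :
    ∀ j, schFnBiv p (![![0, g * pderiv 2 f, -(g * pderiv 1 f)],
                      ![-(g * pderiv 2 f), 0, g * pderiv 0 f],
                      ![g * pderiv 1 f, -(g * pderiv 0 f), 0]]) j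
       = schFnBiv f (![![0, -(g * pderiv 2 p), g * pderiv 1 p],
                      ![g * pderiv 2 p, 0, -(g * pderiv 0 p)],
                      ![-(g * pderiv 1 p), g * pderiv 0 p, 0]]) j := by
  intro j
  rcases fin3cases j with rfl|rfl|rfl <;>
    · simp only [schFnBiv, Fin.sum_univ_three, Matrix.cons_val_zero, Matrix.cons_val_one,
        Matrix.head_cons, Matrix.cons_val_two, Matrix.tail_cons]
      ring

lemma part2alt {K : Type*} [Field K] (g p : MvPolynomial (Fin 3) K) :
    IsAltBiv (![![0, -(g * pderiv 2 p), g * pderiv 1 p],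
                      ![g * pderiv 2 p, 0, -(g * pderiv 0 p)],
                      ![-(g * pderiv 1 p), g * pderiv 0 p, 0]]) := by
  intro i j
  rcases fin3cases i with rfl|rfl|rfl <;> rcases fin3cases j with rfl|rfl|rfl <;>
    simp [Matrix.cons_val_zero, Matrix.cons_val_one,
        Matrix.head_cons, Matrix.cons_val_two, Matrix.tail_cons]

end Auxiliary

/-- Let `k` be a field of characteristic zero and `f ∈ k[x,y,z]` with
finite Milnor number.  Every quasiclassical datum `(p, S)`, consisting of `p ∈ k[x,y,z]`
and a bivector field `S` with `[f, S] = 0`, automatically satisfies `[S, S] = 0` and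
`[p, S]` lies in the image of `ad_f` on bivectors, i.e. there is a bivector `S₂` with
`[p, S] = [f, S₂]`: every first-order noncommutative unfolding of `f` given by `(p, S)`
extends to second order. -/
theorem unfolding_stmt15 (K : Type*) [Field K] [CharZero K]
    (f : MvPolynomial (Fin 3) K)
    (hμ : FiniteDimensional K
      (MvPolynomial (Fin 3) K ⧸
        Ideal.span (Set.range fun i : Fin 3 => pderiv i f)))
    (p : MvPolynomial (Fin 3) K)
    (S : Fin 3 → Fin 3 → MvPolynomial (Fin 3) K) (hSalt : IsAltBiv S)
    (hfS : ∀ j, schFnBiv f S j = 0) :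
    (∀ i j l, schBivBiv S i j l = 0) ∧
    ∃ S₂ : Fin 3 → Fin 3 → MvPolynomial (Fin 3) K,
      IsAltBiv S₂ ∧ ∀ j, schFnBiv p S j = schFnBiv f S₂ j := by
  have hcop : ∀ q, q ∣ pderiv 0 f → q ∣ pderiv 1 f → q ∣ pderiv 2 f → IsUnit q := by
    intro q h0 h1 h2
    exact coprime_of_fd f hμ q (fun i => by fin_cases i <;> assumption)
  have hd : ∀ i : Fin 3, S i i = 0 := fun i => CharZero.eq_neg_self_iff.1 (hSalt i i)
  have e10 : S 1 0 = -S 0 1 := hSalt 1 0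
  have e02 : S 0 2 = -S 2 0 := hSalt 0 2
  have e21 : S 2 1 = -S 1 2 := hSalt 2 1
  have hfS0 := hfS 0
  have hfS1 := hfS 1
  have hfS2 := hfS 2
  simp only [schFnBiv, Fin.sum_univ_three] at hfS0 hfS1 hfS2
  rw [hd 0, e10] at hfS0
  rw [hd 1, e21] at hfS1
  rw [hd 2, e02] at hfS2
  have hab : S 1 2 * pderiv 1 f = S 2 0 * pderiv 0 f := by linear_combination hfS2
  have hac : S 1 2 * pderiv 2 f = S 0 1 * pderiv 0 f := by linear_combination -hfS1
  have hbc : S 2 0 * pderiv 2 f = S 0 1 * pderiv 1 f := by linear_combination hfS0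
  have hg : ∃ g, S 1 2 = g * pderiv 0 f ∧ S 2 0 = g * pderiv 1 f ∧ S 0 1 = g * pderiv 2 f := by
    rcases eq_or_ne (pderiv 0 f) 0 with ha | ha
    · rcases eq_or_ne (pderiv 1 f) 0 with hb | hb
      · rcases eq_or_ne (pderiv 2 f) 0 with hc | hc
        · exact absurd (hcop 0 (by simp [ha]) (by simp [hb]) (by simp [hc])) not_isUnit_zero
        · obtain ⟨g, h1, h2, h3⟩ := key_prop (a := pderiv 2 f) (b := pderiv 0 f)
            (c := pderiv 1 f) (u := S 0 1) (v := S 1 2) (w := S 2 0)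
            (fun q q2 q0 q1 => hcop q q0 q1 q2) hc
            (by linear_combination -hac) (by linear_combination -hbc)
          exact ⟨g, h2, h3, h1⟩
      · obtain ⟨g, h1, h2, h3⟩ := key_prop (a := pderiv 1 f) (b := pderiv 0 f)
          (c := pderiv 2 f) (u := S 2 0) (v := S 1 2) (w := S 0 1)
          (fun q q1 q0 q2 => hcop q q0 q1 q2) hb
          (by linear_combination -hab) (by linear_combination hbc)
        exact ⟨g, h2, h1, h3⟩
    · exact key_prop hcop ha hab hac
  obtain ⟨g, hu, hv, hw⟩ := hg
  have hSform : S = ![![0, g * pderiv 2 f, -(g * pderiv 1 f)],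
                      ![-(g * pderiv 2 f), 0, g * pderiv 0 f],
                      ![g * pderiv 1 f, -(g * pderiv 0 f), 0]] := by
    funext i j
    rcases fin3cases i with rfl|rfl|rfl <;> rcases fin3cases j with rfl|rfl|rfl <;>
      simp [hd, hu, hv, hw, e10, e02, e21]
  have c10 : pderiv 1 (pderiv 0 f) = pderiv 0 (pderiv 1 f) := pderiv_comm' _ _ f
  have c20 : pderiv 2 (pderiv 0 f) = pderiv 0 (pderiv 2 f) := pderiv_comm' _ _ f
  have c21 : pderiv 2 (pderiv 1 f) = pderiv 1 (pderiv 2 f) := pderiv_comm' _ _ f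
  constructor
  · rw [hSform]
    exact part1 f g c10 c20 c21
  · refine ⟨![![0, -(g * pderiv 2 p), g * pderiv 1 p],
              ![g * pderiv 2 p, 0, -(g * pderiv 0 p)],
              ![-(g * pderiv 1 p), g * pderiv 0 p, 0]], part2alt g p, ?_⟩
    rw [hSform]
    exact part2 f g p
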